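/- The curve γ(t) = λ(t,θ) z₁ + λ(1−t,θ) z₀ satisfies the geodesic equation γ''(t) = −θ² · γ(t) for all t ∈ ℝ; in particular its acceleration is at every point a scalar multiple of γ(t), which is the Lorentzian normal vector to Λ^{n+1} at γ(t), so γ is a Lorentzian geodesic of Λ^{n+1} joining z₀ to z₁. -/

import Mathlib

open RealInnerProductSpace

/-- The function `λ(x,θ)`: `sin(xθ)/sin(θ)` for `θ ≠ 0`, and `x` for `θ = 0`. -/
noncomputable def lam (x θ : ℝ) : ℝ := if θ = 0 then x else Real.sin (x * θ) / Real.sin θ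

/-- The point `(u, cε) = (u₁, …, u_n, c, c) ∈ ℝ^{n+2}`. -/
noncomputable def emb {n : ℕ} (u : EuclideanSpace ℝ (Fin n)) (c : ℝ) : Fin (n + 2) → ℝ :=
  fun i => if h : (i : ℕ) < n then u ⟨i, h⟩ else c

/-- The curve `γ(t) = λ(t,θ) z₁ + λ(1−t,θ) z₀` satisfies the geodesic equation
`γ''(t) = −θ² γ(t)` for all `t`, its acceleration being at each point a scalar multiple of
`γ(t)`, the Lorentzian normal to `Λ^{n+1}` at `γ(t)`; so `γ` is a Lorentzian geodesic of
`Λ^{n+1}` joining `z₀` to `z₁`. -/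
theorem geodesic_equation {n : ℕ} (hn : 1 ≤ n)
    (n₀ n₁ : EuclideanSpace ℝ (Fin n)) (c₀ c₁ : ℝ)
    (hn₀ : ‖n₀‖ = 1) (hn₁ : ‖n₁‖ = 1) (hne : n₁ ≠ -n₀)
    (θ : ℝ) (hθ : θ ∈ Set.Ico 0 Real.pi) (hcos : Real.cos θ = ⟪n₀, n₁⟫)
    (γ : ℝ → Fin (n + 2) → ℝ)
    (hγ : ∀ t, γ t = lam t θ • emb n₁ c₁ + lam (1 - t) θ • emb n₀ c₀) :
    γ 0 = emb n₀ c₀ ∧ γ 1 = emb n₁ c₁ ∧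
    ∀ t : ℝ, deriv (deriv γ) t = (-θ ^ 2) • γ t := by
  have hγ' : γ = fun t => lam t θ • emb n₁ c₁ + lam (1 - t) θ • emb n₀ c₀ := funext hγ
  subst hγ'
  set z1 := emb n₁ c₁ with hz1
  set z0 := emb n₀ c₀ with hz0
  rcases eq_or_ne θ 0 with h | h
  · subst h
    have hl : ∀ x : ℝ, lam x 0 = x := fun x => if_pos rfl
    simp only [hl]
    refine ⟨by simp, by simp, ?_⟩
    have hD : ∀ t : ℝ, HasDerivAt (fun t : ℝ => t • z1 + (1 - t) • z0)
        ((1:ℝ) • z1 + (0 - 1 : ℝ) • z0) t := by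
      intro t
      exact ((hasDerivAt_id t).smul_const z1).add
        (((hasDerivAt_const t (1:ℝ)).sub (hasDerivAt_id t)).smul_const z0)
    have hd : deriv (fun t : ℝ => t • z1 + (1 - t) • z0)
        = fun _ : ℝ => (1:ℝ) • z1 + (0 - 1 : ℝ) • z0 := funext fun t => (hD t).deriv
    intro t
    rw [hd, deriv_const]
    simp
  · have hs : Real.sin θ ≠ 0 :=
      (Real.sin_pos_of_pos_of_lt_pi (lt_of_le_of_ne hθ.1 (Ne.symm h)) hθ.2).ne'
    simp only [lam, if_neg h]
    refine ⟨by simp [div_self hs], by simp [div_self hs], ?_⟩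
    intro t
    have hF : ∀ t : ℝ, HasDerivAt (fun t : ℝ => Real.sin (t * θ) / Real.sin θ)
        (Real.cos (t * θ) * (1 * θ) / Real.sin θ) t := fun t =>
      ((Real.hasDerivAt_sin (t * θ)).comp t ((hasDerivAt_id t).mul_const θ)).div_const _
    have hG : ∀ t : ℝ, HasDerivAt (fun t : ℝ => Real.sin ((1 - t) * θ) / Real.sin θ)
        (Real.cos ((1 - t) * θ) * ((0 - 1) * θ) / Real.sin θ) t := fun t =>
      ((Real.hasDerivAt_sin ((1 - t) * θ)).comp t
        (((hasDerivAt_const t (1:ℝ)).sub (hasDerivAt_id t)).mul_const θ)).div_const _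
    have hD : ∀ t : ℝ, HasDerivAt
        (fun t : ℝ => (Real.sin (t * θ) / Real.sin θ) • z1 + (Real.sin ((1 - t) * θ) / Real.sin θ) • z0)
        ((Real.cos (t * θ) * (1 * θ) / Real.sin θ) • z1
          + (Real.cos ((1 - t) * θ) * ((0 - 1) * θ) / Real.sin θ) • z0) t := fun t =>
      ((hF t).smul_const z1).add ((hG t).smul_const z0)
    have hd : deriv (fun t : ℝ => (Real.sin (t * θ) / Real.sin θ) • z1
          + (Real.sin ((1 - t) * θ) / Real.sin θ) • z0)
        = fun t : ℝ => (Real.cos (t * θ) * (1 * θ) / Real.sin θ) • z1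
          + (Real.cos ((1 - t) * θ) * ((0 - 1) * θ) / Real.sin θ) • z0 :=
      funext fun t => (hD t).deriv
    rw [hd]
    have hF2 : HasDerivAt (fun t : ℝ => Real.cos (t * θ) * (1 * θ) / Real.sin θ)
        ((-Real.sin (t * θ) * (1 * θ)) * (1 * θ) / Real.sin θ) t :=
      (((Real.hasDerivAt_cos (t * θ)).comp t ((hasDerivAt_id t).mul_const θ)).mul_const
        (1 * θ)).div_const _
    have hG2 : HasDerivAt (fun t : ℝ => Real.cos ((1 - t) * θ) * ((0 - 1) * θ) / Real.sin θ)
        ((-Real.sin ((1 - t) * θ) * ((0 - 1) * θ)) * ((0 - 1) * θ) / Real.sin θ) t :=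
      (((Real.hasDerivAt_cos ((1 - t) * θ)).comp t
        (((hasDerivAt_const t (1:ℝ)).sub (hasDerivAt_id t)).mul_const θ)).mul_const
        ((0 - 1) * θ)).div_const _
    have hD2 : deriv (fun t : ℝ => (Real.cos (t * θ) * (1 * θ) / Real.sin θ) • z1
          + (Real.cos ((1 - t) * θ) * ((0 - 1) * θ) / Real.sin θ) • z0) t
        = ((-Real.sin (t * θ) * (1 * θ)) * (1 * θ) / Real.sin θ) • z1
          + ((-Real.sin ((1 - t) * θ) * ((0 - 1) * θ)) * ((0 - 1) * θ) / Real.sin θ) • z0 :=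
      ((hF2.smul_const z1).add (hG2.smul_const z0)).deriv
    rw [hD2]
    rw [smul_add, smul_smul, smul_smul]
    have e1 : (-Real.sin (t * θ) * (1 * θ)) * (1 * θ) / Real.sin θ
        = -θ ^ 2 * (Real.sin (t * θ) / Real.sin θ) := by ring
    have e2 : (-Real.sin ((1 - t) * θ) * ((0 - 1) * θ)) * ((0 - 1) * θ) / Real.sin θ
        = -θ ^ 2 * (Real.sin ((1 - t) * θ) / Real.sin θ) := by ring
    rw [e1, e2]
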